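/- Let T ∈ (0,∞], let λ : [0,T) → ℝ be smooth, and let p : ℝ × [0,T) → ℝ be smooth, 2π-periodic in θ, satisfying ∂p/∂t = ∂²p/∂θ² + p − λ(t). Then the functions t ↦ ∫₀^{2π} p(θ,t) cos θ dθ and t ↦ ∫₀^{2π} p(θ,t) sin θ dθ are constant on [0,T); that is, the Steiner point of the evolving curve is fixed under the flow. -/

import Mathlib

open Real Filter
open scoped ENNReal

/-- The time interval `[0, T)` for `T ∈ (0, ∞]`, as a subset of ℝ. -/
def timeDom (T : ℝ≥0∞) : Set ℝ := {t : ℝ | 0 ≤ t ∧ ENNReal.ofReal t < T}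

section Aux
open MeasureTheory intervalIntegral Set
open scoped Topology

lemma periodic_deriv' {q : ℝ → ℝ} {c : ℝ} (h : Function.Periodic q c) :
    Function.Periodic (deriv q) c := by
  intro x
  have hfun : (fun y => q (y + c)) = q := funext h
  calc deriv q (x + c) = deriv (fun y => q (y + c)) x := (deriv_comp_add_const q c x).symm
    _ = deriv q x := by rw [hfun]

lemma ibp_cos (q : ℝ → ℝ) (hq : ContDiff ℝ (⊤:ℕ∞) q) (hper : Function.Periodic q (2*π)) (c : ℝ) :
    ∫ θ in (0:ℝ)..(2*π), (iteratedDeriv 2 q θ + q θ - c) * Real.cos θ = 0 := by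
  have hq1 : ContDiff ℝ (⊤:ℕ∞) (deriv q) := (contDiff_infty_iff_deriv.mp hq).2
  have hi2 : iteratedDeriv 2 q = deriv (deriv q) := by
    rw [iteratedDeriv_succ, iteratedDeriv_one]
  have hq2cont : Continuous (iteratedDeriv 2 q) := by
    rw [hi2]; exact (contDiff_infty_iff_deriv.mp hq1).2.continuous
  set H : ℝ → ℝ := fun θ => deriv q θ * Real.cos θ + q θ * Real.sin θ - c * Real.sin θ with hH
  have key : ∀ θ : ℝ, HasDerivAt H ((iteratedDeriv 2 q θ + q θ - c) * Real.cos θ) θ := by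
    intro θ
    have h1 : HasDerivAt (deriv q) (iteratedDeriv 2 q θ) θ := by
      rw [hi2]; exact ((contDiff_infty_iff_deriv.mp hq1).1 θ).hasDerivAt
    have hqθ : HasDerivAt q (deriv q θ) θ := ((contDiff_infty_iff_deriv.mp hq).1 θ).hasDerivAt
    have hc : HasDerivAt Real.cos (-Real.sin θ) θ := Real.hasDerivAt_cos θ
    have hs : HasDerivAt Real.sin (Real.cos θ) θ := Real.hasDerivAt_sin θ
    have := ((h1.mul hc).add (hqθ.mul hs)).sub ((hasDerivAt_const θ c).mul hs)
    exact this.congr_deriv (by ring)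
  have hint : IntervalIntegrable (fun θ => (iteratedDeriv 2 q θ + q θ - c) * Real.cos θ)
      volume 0 (2*π) :=
    (((hq2cont.add hq.continuous).sub continuous_const).mul Real.continuous_cos).intervalIntegrable _ _
  rw [integral_eq_sub_of_hasDerivAt (fun x _ => key x) hint]
  have hdper : deriv q (2*π) = deriv q 0 := by
    have := periodic_deriv' hper 0
    simpa using this
  simp [hH, Real.cos_two_pi, Real.sin_two_pi, hdper]

lemma ibp_sin (q : ℝ → ℝ) (hq : ContDiff ℝ (⊤:ℕ∞) q) (hper : Function.Periodic q (2*π)) (c : ℝ) :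
    ∫ θ in (0:ℝ)..(2*π), (iteratedDeriv 2 q θ + q θ - c) * Real.sin θ = 0 := by
  have hq1 : ContDiff ℝ (⊤:ℕ∞) (deriv q) := (contDiff_infty_iff_deriv.mp hq).2
  have hi2 : iteratedDeriv 2 q = deriv (deriv q) := by
    rw [iteratedDeriv_succ, iteratedDeriv_one]
  have hq2cont : Continuous (iteratedDeriv 2 q) := by
    rw [hi2]; exact (contDiff_infty_iff_deriv.mp hq1).2.continuous
  set H : ℝ → ℝ := fun θ => deriv q θ * Real.sin θ - q θ * Real.cos θ + c * Real.cos θ with hH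
  have key : ∀ θ : ℝ, HasDerivAt H ((iteratedDeriv 2 q θ + q θ - c) * Real.sin θ) θ := by
    intro θ
    have h1 : HasDerivAt (deriv q) (iteratedDeriv 2 q θ) θ := by
      rw [hi2]; exact ((contDiff_infty_iff_deriv.mp hq1).1 θ).hasDerivAt
    have hqθ : HasDerivAt q (deriv q θ) θ := ((contDiff_infty_iff_deriv.mp hq).1 θ).hasDerivAt
    have hc : HasDerivAt Real.cos (-Real.sin θ) θ := Real.hasDerivAt_cos θ
    have hs : HasDerivAt Real.sin (Real.cos θ) θ := Real.hasDerivAt_sin θ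
    have := ((h1.mul hs).sub (hqθ.mul hc)).add ((hasDerivAt_const θ c).mul hc)
    exact this.congr_deriv (by ring)
  have hint : IntervalIntegrable (fun θ => (iteratedDeriv 2 q θ + q θ - c) * Real.sin θ)
      volume 0 (2*π) :=
    (((hq2cont.add hq.continuous).sub continuous_const).mul Real.continuous_sin).intervalIntegrable _ _
  rw [integral_eq_sub_of_hasDerivAt (fun x _ => key x) hint]
  have hqper : q (2*π) = q 0 := by simpa using hper 0
  simp [hH, Real.cos_two_pi, Real.sin_two_pi, hqper]

lemma swap_int (f : ℝ → ℝ → ℝ) (a b c d : ℝ) (hab : a ≤ b) (hcd : c ≤ d)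
    (hf : ContinuousOn (Function.uncurry f) (Set.Icc a b ×ˢ Set.Icc c d)) :
    ∫ x in a..b, ∫ y in c..d, f x y = ∫ y in c..d, ∫ x in a..b, f x y := by
  have h1 : ∀ x, (∫ y in c..d, f x y) = ∫ y in Set.Ioc c d, f x y := fun x =>
    intervalIntegral.integral_of_le hcd
  have h2 : ∀ y, (∫ x in a..b, f x y) = ∫ x in Set.Ioc a b, f x y := fun y =>
    intervalIntegral.integral_of_le hab
  rw [intervalIntegral.integral_of_le hab, intervalIntegral.integral_of_le hcd]
  simp only [h1, h2]
  have hK : IsCompact (Set.Icc a b ×ˢ Set.Icc c d) := isCompact_Icc.prod isCompact_Icc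
  have hintK : IntegrableOn (Function.uncurry f) (Set.Icc a b ×ˢ Set.Icc c d) volume :=
    hf.integrableOn_compact hK
  have hsub : (Set.Ioc a b ×ˢ Set.Ioc c d) ⊆ (Set.Icc a b ×ˢ Set.Icc c d) :=
    Set.prod_mono Set.Ioc_subset_Icc_self Set.Ioc_subset_Icc_self
  have hint : Integrable (Function.uncurry f)
      ((volume.restrict (Set.Ioc a b)).prod (volume.restrict (Set.Ioc c d))) := by
    rw [Measure.prod_restrict]
    have : (volume : Measure (ℝ × ℝ)) = (volume : Measure ℝ).prod (volume : Measure ℝ) :=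
      Measure.volume_eq_prod ℝ ℝ
    rw [← this]
    exact (hintK.mono_set hsub)
  exact MeasureTheory.integral_integral_swap hint

theorem steiner_point_fixed'
    (T : ℝ≥0∞) (hT : 0 < T)
    (lam : ℝ → ℝ) (p : ℝ → ℝ → ℝ)
    (hlam : ContDiffOn ℝ (⊤ : ℕ∞) lam ({t : ℝ | 0 ≤ t ∧ ENNReal.ofReal t < T}))
    (hp : ContDiffOn ℝ (⊤ : ℕ∞) (Function.uncurry p) (({t : ℝ | 0 ≤ t ∧ ENNReal.ofReal t < T}) ×ˢ (Set.univ : Set ℝ)))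
    (hper : ∀ t ∈ ({t : ℝ | 0 ≤ t ∧ ENNReal.ofReal t < T}), Function.Periodic (p t) (2 * π))
    (hpde : ∀ t ∈ ({t : ℝ | 0 ≤ t ∧ ENNReal.ofReal t < T}), ∀ θ : ℝ,
      derivWithin (fun s => p s θ) ({t : ℝ | 0 ≤ t ∧ ENNReal.ofReal t < T}) t
        = iteratedDeriv 2 (p t) θ + p t θ - lam t) :
    (∀ s ∈ ({t : ℝ | 0 ≤ t ∧ ENNReal.ofReal t < T}), ∀ t ∈ ({t : ℝ | 0 ≤ t ∧ ENNReal.ofReal t < T}),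
      (∫ θ in (0:ℝ)..(2 * π), p s θ * Real.cos θ)
        = ∫ θ in (0:ℝ)..(2 * π), p t θ * Real.cos θ) ∧
    (∀ s ∈ ({t : ℝ | 0 ≤ t ∧ ENNReal.ofReal t < T}), ∀ t ∈ ({t : ℝ | 0 ≤ t ∧ ENNReal.ofReal t < T}),
      (∫ θ in (0:ℝ)..(2 * π), p s θ * Real.sin θ)
        = ∫ θ in (0:ℝ)..(2 * π), p t θ * Real.sin θ) := by
  set D : Set ℝ := {t : ℝ | 0 ≤ t ∧ ENNReal.ofReal t < T} with hD
  have twopi : (0:ℝ) ≤ 2*π := by positivity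
  have h0mem : (0:ℝ) ∈ D := ⟨le_rfl, by simpa using hT⟩
  have hslice : ∀ t ∈ D, ContDiff ℝ (⊤:ℕ∞) (p t) := by
    intro t ht
    have h1 : ContDiffOn ℝ (⊤:ℕ∞) (fun θ : ℝ => Function.uncurry p (t, θ)) Set.univ :=
      hp.comp ((contDiff_const.prodMk contDiff_id).contDiffOn) (fun θ _ => ⟨ht, trivial⟩)
    rw [contDiffOn_univ] at h1
    exact h1
  have main : ∀ w : ℝ → ℝ, Continuous w →
      (∀ q : ℝ → ℝ, ContDiff ℝ (⊤:ℕ∞) q → Function.Periodic q (2*π) → ∀ c : ℝ,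
        (∫ θ in (0:ℝ)..(2*π), (iteratedDeriv 2 q θ + q θ - c) * w θ) = 0) →
      ∀ s ∈ D, ∀ t ∈ D,
        (∫ θ in (0:ℝ)..(2*π), p s θ * w θ) = ∫ θ in (0:ℝ)..(2*π), p t θ * w θ := by
    intro w hw hw0
    set F : ℝ → ℝ := fun t => ∫ θ in (0:ℝ)..(2*π), p t θ * w θ with hF
    set S : Set ℝ := Set.Ioi 0 ∩ ENNReal.ofReal ⁻¹' (Set.Iio T) with hS
    have hSopen : IsOpen S := isOpen_Ioi.inter (isOpen_Iio.preimage ENNReal.continuous_ofReal)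
    have hStd : S ⊆ D := fun u hu => ⟨le_of_lt hu.1, hu.2⟩
    set U : Set (ℝ × ℝ) := S ×ˢ (Set.univ : Set ℝ) with hU
    have hUopen : IsOpen U := hSopen.prod isOpen_univ
    have hpU : ContDiffOn ℝ (⊤:ℕ∞) (Function.uncurry p) U :=
      hp.mono (Set.prod_mono hStd subset_rfl)
    set Φ : ℝ × ℝ → ℝ := fun x => fderiv ℝ (Function.uncurry p) x (1, 0) with hΦ
    have hΦcont : ContinuousOn Φ U :=
      (hpU.continuousOn_fderiv_of_isOpen hUopen (by exact_mod_cast le_top)).clm_apply continuousOn_const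
    have hΦderiv : ∀ x ∈ U, HasDerivAt (fun u => p u x.2) (Φ x) x.1 := by
      intro x hx
      have hdiff : DifferentiableAt ℝ (Function.uncurry p) x :=
        (hpU.contDiffAt (hUopen.mem_nhds hx)).differentiableAt (by simp)
      have hline : HasDerivAt (fun u : ℝ => (u, x.2)) ((1:ℝ), (0:ℝ)) x.1 :=
        (hasDerivAt_id x.1).prodMk (hasDerivAt_const x.1 x.2)
      exact hdiff.hasFDerivAt.comp_hasDerivAt x.1 hline
    have hΦeq : ∀ u ∈ S, ∀ θ : ℝ, Φ (u, θ) = iteratedDeriv 2 (p u) θ + p u θ - lam u := by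
      intro u hu θ
      have hnb : D ∈ 𝓝 u := mem_of_superset (hSopen.mem_nhds hu) hStd
      have h1 : derivWithin (fun s => p s θ) D u = deriv (fun s => p s θ) u :=
        derivWithin_of_mem_nhds hnb
      have h2 : deriv (fun s => p s θ) u = Φ (u, θ) := (hΦderiv (u, θ) ⟨hu, trivial⟩).deriv
      rw [← h2, ← h1]; exact hpde u (hStd hu) θ
    have hintθ : ∀ r ∈ D, IntervalIntegrable (fun θ => p r θ * w θ) volume 0 (2*π) :=
      fun r hr => ((hslice r hr).continuous.mul hw).intervalIntegrable _ _
    have hcore : ∀ s t : ℝ, s ∈ D → t ∈ D → 0 < s → s ≤ t → F s = F t := by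
      intro s t hs ht hspos hst
      have hsub : Set.Icc s t ⊆ S := fun u hu =>
        ⟨lt_of_lt_of_le hspos hu.1, lt_of_le_of_lt (ENNReal.ofReal_le_ofReal hu.2) ht.2⟩
      have hIcc : Set.uIcc s t = Set.Icc s t := Set.uIcc_of_le hst
      have hftc : ∀ θ : ℝ, p t θ - p s θ = ∫ u in s..t, Φ (u, θ) := by
        intro θ
        have hderivs : ∀ u ∈ Set.uIcc s t, HasDerivAt (fun v => p v θ) (Φ (u, θ)) u :=
          fun u hu => hΦderiv (u, θ) ⟨hsub (hIcc ▸ hu), trivial⟩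
        have hcontΦ : ContinuousOn (fun u => Φ (u, θ)) (Set.uIcc s t) := by
          rw [hIcc]
          exact hΦcont.comp (Continuous.continuousOn (continuous_id.prodMk continuous_const))
            (fun u hu => ⟨hsub hu, trivial⟩)
        exact (integral_eq_sub_of_hasDerivAt hderivs hcontΦ.intervalIntegrable).symm
      have hdiff : F t - F s = ∫ θ in (0:ℝ)..(2*π), (p t θ - p s θ) * w θ := by
        rw [hF]
        rw [← intervalIntegral.integral_sub (hintθ t ht) (hintθ s hs)]
        apply intervalIntegral.integral_congr
        intro θ _
        ring
      have hcont2 : ContinuousOn (Function.uncurry fun (θ u : ℝ) => Φ (u, θ) * w θ)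
          (Set.Icc 0 (2*π) ×ˢ Set.Icc s t) := by
        apply ContinuousOn.mul
        · exact hΦcont.comp (Continuous.continuousOn (continuous_snd.prodMk continuous_fst))
            (fun z hz => ⟨hsub hz.2, trivial⟩)
        · exact (hw.comp continuous_fst).continuousOn
      have hswap := swap_int (fun θ u => Φ (u, θ) * w θ) 0 (2*π) s t twopi hst hcont2
      have hzero : ∀ u ∈ Set.uIcc s t, (∫ θ in (0:ℝ)..(2*π), Φ (u, θ) * w θ) = 0 := by
        intro u hu
        have huS : u ∈ S := hsub (hIcc ▸ hu)
        have h1 : (∫ θ in (0:ℝ)..(2*π), Φ (u, θ) * w θ)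
            = ∫ θ in (0:ℝ)..(2*π), (iteratedDeriv 2 (p u) θ + p u θ - lam u) * w θ :=
          intervalIntegral.integral_congr (fun θ _ => by rw [hΦeq u huS θ])
        rw [h1]
        exact hw0 (p u) (hslice u (hStd huS)) (hper u (hStd huS)) (lam u)
      have hkey : F t - F s = 0 := by
        rw [hdiff]
        calc (∫ θ in (0:ℝ)..(2*π), (p t θ - p s θ) * w θ)
            = ∫ θ in (0:ℝ)..(2*π), (∫ u in s..t, Φ (u, θ)) * w θ :=
              intervalIntegral.integral_congr (fun θ _ => by rw [hftc θ])
          _ = ∫ θ in (0:ℝ)..(2*π), ∫ u in s..t, Φ (u, θ) * w θ :=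
              intervalIntegral.integral_congr
                (fun θ _ => (intervalIntegral.integral_mul_const _ _).symm)
          _ = ∫ u in s..t, ∫ θ in (0:ℝ)..(2*π), Φ (u, θ) * w θ := hswap
          _ = ∫ u in s..t, (0:ℝ) := intervalIntegral.integral_congr hzero
          _ = 0 := by simp
      linarith
    have hle : ∀ s t : ℝ, s ∈ D → t ∈ D → s ≤ t → F s = F t := by
      intro s t hs ht hst
      rcases eq_or_lt_of_le hs.1 with h0 | h0
      · subst h0
        rcases eq_or_lt_of_le hst with rfl | htpos
        · rfl
        · have hIoo : Set.Ioo (0:ℝ) t ⊆ D := fun u hu =>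
            ⟨hu.1.le, lt_of_le_of_lt (ENNReal.ofReal_le_ofReal hu.2.le) ht.2⟩
          haveI : (𝓝[Set.Ioo (0:ℝ) t] (0:ℝ)).NeBot := by
            apply mem_closure_iff_nhdsWithin_neBot.mp
            rw [closure_Ioo htpos.ne]
            exact ⟨le_rfl, htpos.le⟩
          obtain ⟨C, hC⟩ : ∃ C, ∀ x ∈ Set.Icc (0:ℝ) t ×ˢ Set.Icc (0:ℝ) (2*π),
              ‖Function.uncurry p x‖ ≤ C := by
            apply (isCompact_Icc.prod isCompact_Icc).exists_bound_of_continuousOn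
            exact hp.continuousOn.mono (Set.prod_mono
              (fun u hu => ⟨hu.1, lt_of_le_of_lt (ENNReal.ofReal_le_ofReal hu.2) ht.2⟩)
              (Set.subset_univ _))
          obtain ⟨C', hC'⟩ : ∃ C', ∀ x ∈ Set.Icc (0:ℝ) (2*π), ‖w x‖ ≤ C' :=
            isCompact_Icc.exists_bound_of_continuousOn hw.continuousOn
          have htendsto : Tendsto F (𝓝[Set.Ioo (0:ℝ) t] 0) (𝓝 (F 0)) := by
            apply intervalIntegral.tendsto_integral_filter_of_dominated_convergence
              (fun _ => C * C')
            · filter_upwards [self_mem_nhdsWithin] with u hu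
              exact ((hslice u (hIoo hu)).continuous.mul hw).aestronglyMeasurable
            · filter_upwards [self_mem_nhdsWithin] with u hu
              apply Filter.Eventually.of_forall
              intro θ hθ
              have hθ' : θ ∈ Set.Icc (0:ℝ) (2*π) :=
                Set.Ioc_subset_Icc_self (by rwa [Set.uIoc_of_le twopi] at hθ)
              have h1 : ‖p u θ‖ ≤ C := hC (u, θ) ⟨⟨hu.1.le, hu.2.le⟩, hθ'⟩
              have h2 : ‖w θ‖ ≤ C' := hC' θ hθ'
              calc ‖p u θ * w θ‖ = ‖p u θ‖ * ‖w θ‖ := norm_mul _ _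
                _ ≤ C * C' := mul_le_mul h1 h2 (norm_nonneg _) ((norm_nonneg _).trans h1)
            · exact intervalIntegrable_const
            · apply Filter.Eventually.of_forall
              intro θ _
              have hcw : ContinuousWithinAt (fun u => p u θ) D 0 := by
                have hco : ContinuousOn (fun u : ℝ => Function.uncurry p (u, θ)) D :=
                  hp.continuousOn.comp
                    (Continuous.continuousOn (continuous_id.prodMk continuous_const))
                    (fun u hu => ⟨hu, trivial⟩)
                exact hco 0 h0mem
              exact ((hcw.mono hIoo).tendsto).mul_const (w θ)
          have heq : ∀ᶠ u in 𝓝[Set.Ioo (0:ℝ) t] (0:ℝ), F u = F t := by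
            filter_upwards [self_mem_nhdsWithin] with u hu
            exact hcore u t (hIoo hu) ht hu.1 hu.2.le
          exact tendsto_nhds_unique (htendsto.congr' heq) tendsto_const_nhds
      · exact hcore s t hs ht h0 hst
    intro s hs t ht
    rcases le_total s t with h | h
    · exact hle s t hs ht h
    · exact (hle t s ht hs h).symm
  exact ⟨main Real.cos Real.continuous_cos ibp_cos, main Real.sin Real.continuous_sin ibp_sin⟩

end Aux

theorem steiner_point_fixed
    (T : ℝ≥0∞) (hT : 0 < T)
    (lam : ℝ → ℝ) (p : ℝ → ℝ → ℝ)
    (hlam : ContDiffOn ℝ (⊤ : ℕ∞) lam (timeDom T))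
    (hp : ContDiffOn ℝ (⊤ : ℕ∞) (Function.uncurry p) (timeDom T ×ˢ (Set.univ : Set ℝ)))
    (hper : ∀ t ∈ timeDom T, Function.Periodic (p t) (2 * π))
    (hpde : ∀ t ∈ timeDom T, ∀ θ : ℝ,
      derivWithin (fun s => p s θ) (timeDom T) t
        = iteratedDeriv 2 (p t) θ + p t θ - lam t) :
    (∀ s ∈ timeDom T, ∀ t ∈ timeDom T,
      (∫ θ in (0:ℝ)..(2 * π), p s θ * Real.cos θ)
        = ∫ θ in (0:ℝ)..(2 * π), p t θ * Real.cos θ) ∧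
    (∀ s ∈ timeDom T, ∀ t ∈ timeDom T,
      (∫ θ in (0:ℝ)..(2 * π), p s θ * Real.sin θ)
        = ∫ θ in (0:ℝ)..(2 * π), p t θ * Real.sin θ) :=
  steiner_point_fixed' T hT lam p hlam hp hper hpde
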